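/- For every i ∈ [1..n]: if SA[i] ≠ 1 then SA[LF(i)] = SA[i] − 1, and if SA[i] = 1 then SA[LF(i)] = n. (That is, the LF function maps the position of a character in the BWT to the suffix-array position of the suffix starting one position earlier in the text, cyclically.) -/

import Mathlib

/-- The suffix `T[i..n]` of a 1-indexed string of length `n` (as a list). -/
def suffix {α : Type*} (T : ℕ → α) (n i : ℕ) : List α :=
  (List.range' i (n + 1 - i)).map T

/-- `rank(L,c,i)`: the number of occurrences of the character `c` in `L[1..i]`. -/
def rankL {α : Type*} [DecidableEq α] (L : ℕ → α) (c : α) (i : ℕ) : ℕ :=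
  ((Finset.Icc 1 i).filter (fun j => L j = c)).card

/-- `C[c]`: the number of positions `j ∈ [1..n]` with `L[j]` strictly smaller than `c`. -/
def Cc {α : Type*} [LinearOrder α] (L : ℕ → α) (n : ℕ) (c : α) : ℕ :=
  ((Finset.Icc 1 n).filter (fun j => L j < c)).card

/-- `LF(i) = C[L[i]] + rank(L, L[i], i)`. -/
def LF {α : Type*} [LinearOrder α] (L : ℕ → α) (n i : ℕ) : ℕ :=
  Cc L n (L i) + rankL L (L i) i

/-- The text position preceding `p`, cyclically. -/
def prevIdx (n p : ℕ) : ℕ := if p = 1 then n else p - 1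

/-- cons comparison for the lexicographic order on lists -/
lemma consLe {α : Type*} [LinearOrder α] (a b : α) (l m : List α) :
    (a :: l) ≤ (b :: m) ↔ (a < b ∨ (a = b ∧ l ≤ m)) := by
  constructor
  · intro h
    rcases lt_or_eq_of_le h with h | h
    · have h' : List.Lex (· < ·) (a :: l) (b :: m) := h
      cases h' with
      | cons h' => exact Or.inr ⟨rfl, le_of_lt (show l < m from h')⟩
      | rel h' => exact Or.inl h'
    · injection h with h1 h2
      exact Or.inr ⟨h1, le_of_eq h2⟩
  · rintro (h | ⟨rfl, h⟩)
    · exact le_of_lt (show (a :: l) < (b :: m) from List.Lex.rel h)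
    · rcases lt_or_eq_of_le h with h | rfl
      · exact le_of_lt (show (a :: l) < (a :: m) from List.Lex.cons h)
      · exact le_refl _

/-- For every `i ∈ [1..n]`: if `SA[i] ≠ 1` then `SA[LF(i)] = SA[i] − 1`, and if
`SA[i] = 1` then `SA[LF(i)] = n`. -/
theorem stmt0 {α : Type*} [LinearOrder α] (n : ℕ) (hn : 1 ≤ n)
    (T : ℕ → α) (SA : ℕ → ℕ) (L : ℕ → α)
    (hlast : ∀ i, 1 ≤ i → i < n → T n < T i)
    (hSAbij : Set.BijOn SA (Set.Icc 1 n) (Set.Icc 1 n))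
    (hSAsorted : ∀ i j, 1 ≤ i → i < j → j ≤ n →
      List.Lex (· < ·) (suffix T n (SA i)) (suffix T n (SA j)))
    (hL : ∀ i, 1 ≤ i → i ≤ n → L i = if SA i = 1 then T n else T (SA i - 1)) :
    ∀ i, 1 ≤ i → i ≤ n →
      (SA i ≠ 1 → SA (LF L n i) = SA i - 1) ∧
      (SA i = 1 → SA (LF L n i) = n) := by
  classical
  intro i hi1 hin
  have hSAmem : ∀ j, 1 ≤ j → j ≤ n → 1 ≤ SA j ∧ SA j ≤ n := fun j h1 h2 =>
    hSAbij.mapsTo ⟨h1, h2⟩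
  -- basic suffix facts
  have hsuf : ∀ p, 1 ≤ p → p ≤ n → suffix T n p = T p :: suffix T n (p + 1) := by
    intro p h1 h2
    unfold suffix
    have e1 : n + 1 - p = (n - p) + 1 := by omega
    have e2 : n + 1 - (p + 1) = n - p := by omega
    rw [e1, e2, List.range'_succ, List.map_cons]
  have hsufn : suffix T n n = [T n] := by
    unfold suffix
    have : n + 1 - n = 1 := by omega
    rw [this]
    rfl
  -- strict sortedness using the linear order on lists
  have hlt : ∀ a b, 1 ≤ a → a < b → b ≤ n → suffix T n (SA a) < suffix T n (SA b) :=
    fun a b h1 h2 h3 => hSAsorted a b h1 h2 h3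
  have hle : ∀ a b, 1 ≤ a → a ≤ n → 1 ≤ b → b ≤ n →
      (suffix T n (SA a) ≤ suffix T n (SA b) ↔ a ≤ b) := by
    intro a b ha1 ha2 hb1 hb2
    constructor
    · intro h
      by_contra hab
      push_neg at hab
      exact absurd (hlt b a hb1 hab ha2) (not_lt.mpr h)
    · intro h
      rcases eq_or_lt_of_le h with rfl | h
      · exact le_refl _
      · exact le_of_lt (hlt a b ha1 h hb2)
  -- facts about L
  have hLval : ∀ j, 1 ≤ j → j ≤ n → SA j ≠ 1 → L j = T (SA j - 1) := by
    intro j h1 h2 h3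
    rw [hL j h1 h2, if_neg h3]
  have hLone : ∀ j, 1 ≤ j → j ≤ n → SA j = 1 → L j = T n := by
    intro j h1 h2 h3
    rw [hL j h1 h2, if_pos h3]
  have hLbig : ∀ j, 1 ≤ j → j ≤ n → SA j ≠ 1 → T n < L j := by
    intro j h1 h2 h3
    obtain ⟨hm1, hm2⟩ := hSAmem j h1 h2
    rw [hLval j h1 h2 h3]
    exact hlast (SA j - 1) (by omega) (by omega)
  -- suffix of the cyclic predecessor position
  have hsufprev : ∀ j, 1 ≤ j → j ≤ n → SA j ≠ 1 →
      suffix T n (prevIdx n (SA j)) = L j :: suffix T n (SA j) := by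
    intro j h1 h2 h3
    obtain ⟨hm1, hm2⟩ := hSAmem j h1 h2
    have hp : prevIdx n (SA j) = SA j - 1 := if_neg h3
    have e : SA j - 1 + 1 = SA j := by omega
    rw [hp, hsuf (SA j - 1) (by omega) (by omega), e, hLval j h1 h2 h3]
  have hsufprev1 : ∀ j, 1 ≤ j → j ≤ n → SA j = 1 →
      suffix T n (prevIdx n (SA j)) = [T n] := by
    intro j h1 h2 h3
    have hp : prevIdx n (SA j) = n := by rw [h3]; rfl
    rw [hp, hsufn]
  set x : List α := suffix T n (prevIdx n (SA i)) with hxdef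
  -- the key comparison
  have key : ∀ j, 1 ≤ j → j ≤ n →
      (suffix T n (prevIdx n (SA j)) ≤ x ↔ (L j < L i ∨ (L j = L i ∧ j ≤ i))) := by
    intro j h1 h2
    obtain ⟨hmj1, hmj2⟩ := hSAmem j h1 h2
    by_cases hji : SA j = 1 <;> by_cases hii : SA i = 1
    · -- both 1 : j = i
      have : j = i := hSAbij.injOn ⟨h1, h2⟩ ⟨hi1, hin⟩ (by rw [hji, hii])
      subst this
      simp [le_refl, hxdef]
    · -- SA j = 1, SA i ≠ 1
      rw [hsufprev1 j h1 h2 hji, hxdef, hsufprev i hi1 hin hii]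
      have hb : T n < L i := hLbig i hi1 hin hii
      have hLj : L j = T n := hLone j h1 h2 hji
      constructor
      · intro _
        exact Or.inl (by rw [hLj]; exact hb)
      · intro _
        exact le_of_lt (show [T n] < L i :: suffix T n (SA i) from List.Lex.rel hb)
    · -- SA j ≠ 1, SA i = 1
      rw [hsufprev j h1 h2 hji, hxdef, hsufprev1 i hi1 hin hii]
      have hb : T n < L j := hLbig j h1 h2 hji
      have hLi : L i = T n := hLone i hi1 hin hii
      constructor
      · intro h
        exact absurd (show ([T n] : List α) < L j :: suffix T n (SA j) from List.Lex.rel hb)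
          (not_lt.mpr h)
      · rintro (h | ⟨h, _⟩)
        · exact absurd hb (not_lt.mpr (le_of_lt (by rw [← hLi]; exact h)))
        · exact absurd hb (by rw [h, hLi]; exact lt_irrefl _)
    · -- both ≠ 1
      rw [hsufprev j h1 h2 hji, hxdef, hsufprev i hi1 hin hii, consLe,
        hle j i h1 h2 hi1 hin]
  -- finsets
  set S : Finset ℕ := (Finset.Icc 1 n).filter (fun q => suffix T n q ≤ x) with hS
  set A : Finset ℕ := (Finset.Icc 1 n).filter (fun j => suffix T n (prevIdx n (SA j)) ≤ x) with hA
  set B : Finset ℕ := (Finset.Icc 1 n).filter (fun j => suffix T n (SA j) ≤ x) with hB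
  have hprevmem : ∀ p, 1 ≤ p → p ≤ n → 1 ≤ prevIdx n p ∧ prevIdx n p ≤ n := by
    intro p h1 h2
    unfold prevIdx
    split <;> omega
  have hprevinj : ∀ p q, 1 ≤ p → p ≤ n → 1 ≤ q → q ≤ n → prevIdx n p = prevIdx n q → p = q := by
    intro p q h1 h2 h3 h4 h
    unfold prevIdx at h
    split at h <;> split at h <;> omega
  have hprevsurj : ∀ r, 1 ≤ r → r ≤ n → ∃ p, 1 ≤ p ∧ p ≤ n ∧ prevIdx n p = r := by
    intro r h1 h2
    by_cases hr : r = n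
    · exact ⟨1, le_refl _, hn, by rw [hr]; rfl⟩
    · exact ⟨r + 1, by omega, by omega, by unfold prevIdx; split <;> omega⟩
  -- card A = card S
  have hAS : A.card = S.card := by
    apply Finset.card_bij (fun j _ => prevIdx n (SA j))
    · intro j hj
      rw [hA, Finset.mem_filter, Finset.mem_Icc] at hj
      obtain ⟨⟨h1, h2⟩, h3⟩ := hj
      obtain ⟨hm1, hm2⟩ := hSAmem j h1 h2
      rw [hS, Finset.mem_filter, Finset.mem_Icc]
      exact ⟨⟨(hprevmem _ hm1 hm2).1, (hprevmem _ hm1 hm2).2⟩, h3⟩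
    · intro j1 hj1 j2 hj2 h
      rw [hA, Finset.mem_filter, Finset.mem_Icc] at hj1 hj2
      obtain ⟨hm11, hm12⟩ := hSAmem j1 hj1.1.1 hj1.1.2
      obtain ⟨hm21, hm22⟩ := hSAmem j2 hj2.1.1 hj2.1.2
      exact hSAbij.injOn ⟨hj1.1.1, hj1.1.2⟩ ⟨hj2.1.1, hj2.1.2⟩
        (hprevinj _ _ hm11 hm12 hm21 hm22 h)
    · intro q hq
      rw [hS, Finset.mem_filter, Finset.mem_Icc] at hq
      obtain ⟨⟨hq1, hq2⟩, hq3⟩ := hq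
      obtain ⟨p, hp1, hp2, hp3⟩ := hprevsurj q hq1 hq2
      obtain ⟨j, hjmem, hj⟩ := hSAbij.surjOn (Set.mem_Icc.mpr ⟨hp1, hp2⟩)
      obtain ⟨hj1, hj2⟩ := Set.mem_Icc.mp hjmem
      refine ⟨j, ?_, ?_⟩
      · rw [hA, Finset.mem_filter, Finset.mem_Icc]
        exact ⟨⟨hj1, hj2⟩, by rw [hj, hp3]; exact hq3⟩
      · rw [hj, hp3]
  -- card B = card S
  have hBS : B.card = S.card := by
    apply Finset.card_bij (fun j _ => SA j)
    · intro j hj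
      rw [hB, Finset.mem_filter, Finset.mem_Icc] at hj
      obtain ⟨⟨h1, h2⟩, h3⟩ := hj
      obtain ⟨hm1, hm2⟩ := hSAmem j h1 h2
      rw [hS, Finset.mem_filter, Finset.mem_Icc]
      exact ⟨⟨hm1, hm2⟩, h3⟩
    · intro j1 hj1 j2 hj2 h
      rw [hB, Finset.mem_filter, Finset.mem_Icc] at hj1 hj2
      exact hSAbij.injOn ⟨hj1.1.1, hj1.1.2⟩ ⟨hj2.1.1, hj2.1.2⟩ h
    · intro q hq
      rw [hS, Finset.mem_filter, Finset.mem_Icc] at hq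
      obtain ⟨⟨hq1, hq2⟩, hq3⟩ := hq
      obtain ⟨j, hjmem, hj⟩ := hSAbij.surjOn (Set.mem_Icc.mpr ⟨hq1, hq2⟩)
      obtain ⟨hj1, hj2⟩ := Set.mem_Icc.mp hjmem
      refine ⟨j, ?_, hj⟩
      rw [hB, Finset.mem_filter, Finset.mem_Icc]
      exact ⟨⟨hj1, hj2⟩, by rw [hj]; exact hq3⟩
  -- the suffix array index of the predecessor position
  obtain ⟨hpi1, hpi2⟩ := hSAmem i hi1 hin
  obtain ⟨hpp1, hpp2⟩ := hprevmem (SA i) hpi1 hpi2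
  obtain ⟨k, hkmem, hk⟩ := hSAbij.surjOn (Set.mem_Icc.mpr ⟨hpp1, hpp2⟩)
  obtain ⟨hk1, hk2⟩ := Set.mem_Icc.mp hkmem
  -- card B = k
  have hBk : B = Finset.Icc 1 k := by
    ext j
    rw [hB, Finset.mem_filter, Finset.mem_Icc, Finset.mem_Icc]
    constructor
    · rintro ⟨⟨h1, h2⟩, h3⟩
      rw [hxdef, ← hk] at h3
      exact ⟨h1, (hle j k h1 h2 hk1 hk2).mp h3⟩
    · rintro ⟨h1, h2⟩
      have h2' : j ≤ n := le_trans h2 hk2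
      refine ⟨⟨h1, h2'⟩, ?_⟩
      rw [hxdef, ← hk]
      exact (hle j k h1 h2' hk1 hk2).mpr h2
  -- card A = LF i
  have hALF : A.card = LF L n i := by
    have hcongr : A = (Finset.Icc 1 n).filter (fun j => L j < L i ∨ (L j = L i ∧ j ≤ i)) := by
      rw [hA]
      apply Finset.filter_congr
      intro j hj
      rw [Finset.mem_Icc] at hj
      exact key j hj.1 hj.2
    rw [hcongr, Finset.filter_or, Finset.card_union_of_disjoint]
    · congr 1
      have : (Finset.Icc 1 n).filter (fun j => L j = L i ∧ j ≤ i)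
          = (Finset.Icc 1 i).filter (fun j => L j = L i) := by
        ext j
        simp only [Finset.mem_filter, Finset.mem_Icc]
        constructor
        · rintro ⟨⟨h1, _⟩, h3, h4⟩
          exact ⟨⟨h1, h4⟩, h3⟩
        · rintro ⟨⟨h1, h2⟩, h3⟩
          exact ⟨⟨h1, le_trans h2 hin⟩, h3, h2⟩
      rw [this]
      rfl
    · rw [Finset.disjoint_filter]
      intro j _ h1 h2
      rw [h2.1] at h1
      exact lt_irrefl _ h1
  -- conclude
  have hfin : SA (LF L n i) = prevIdx n (SA i) := by
    have : LF L n i = k := by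
      rw [← hALF, hAS, ← hBS, hBk, Nat.card_Icc]
      omega
    rw [this, hk]
  constructor
  · intro h
    rw [hfin]
    exact if_neg h
  · intro h
    rw [hfin, h]
    rfl
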